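/- The population LSEL is minimized exactly at the true posteriors: for every positive score function q : X × {1,…,K} → ℝ_{>0}, L(q) ≥ L(q*) where q*(x,k) := p(k|x), and equality holds if and only if q(x,k)/Σ_{l=1}^{K} q(x,l) = p(k|x) for all x ∈ X and all k ∈ {1,…,K}. -/

import Mathlib

/-- The population log-sum-exponential loss (LSEL) is minimized exactly at the true
posteriors: for every positive score function `q`, `L q* ≤ L q` where
`q* (x, k) = p(k|x)`, with equality iff the softmax-normalized scores of `q`
coincide with the posteriors everywhere. -/
theorem lsel_minimized_at_posterior
    {X : Type*} [Fintype X] [Nonempty X]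
    {K : ℕ} (hK : 2 ≤ K)
    -- strictly positive joint pmf on X × {1,…,K}
    (p : X × Fin K → ℝ)
    (hpos : ∀ z, 0 < p z)
    (hsum : ∑ z : X × Fin K, p z = 1)
    -- population LSEL
    (L : (X × Fin K → ℝ) → ℝ)
    (hL : ∀ q, L q = ∑ x : X, ∑ k : Fin K,
      p (x, k) * Real.log (1 + ∑ l ∈ Finset.univ.erase k, q (x, l) / q (x, k)))
    -- true posterior scores
    (qstar : X × Fin K → ℝ)
    (hqstar : ∀ x k, qstar (x, k) = p (x, k) / ∑ l : Fin K, p (x, l))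
    -- arbitrary positive score function
    (q : X × Fin K → ℝ) (hq : ∀ z, 0 < q z) :
    L qstar ≤ L q ∧
      (L q = L qstar ↔
        ∀ (x : X) (k : Fin K),
          q (x, k) / ∑ l : Fin K, q (x, l) = p (x, k) / ∑ l : Fin K, p (x, l)) := by
  haveI : NeZero K := ⟨by omega⟩
  set Sp : X → ℝ := fun x => ∑ l : Fin K, p (x, l) with hSpdef
  set Sq : X → ℝ := fun x => ∑ l : Fin K, q (x, l) with hSqdef
  have hSp : ∀ x, 0 < Sp x := fun x =>
    Finset.sum_pos (fun l _ => hpos _) Finset.univ_nonempty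
  have hSq : ∀ x, 0 < Sq x := fun x =>
    Finset.sum_pos (fun l _ => hq _) Finset.univ_nonempty
  set a : X × Fin K → ℝ := fun z => p z / Sp z.1 with hadef
  set b : X × Fin K → ℝ := fun z => q z / Sq z.1 with hbdef
  have ha : ∀ z, 0 < a z := fun z => div_pos (hpos z) (hSp z.1)
  have hb : ∀ z, 0 < b z := fun z => div_pos (hq z) (hSq z.1)
  -- simplify 1 + sum of ratios for a positive function r
  have key : ∀ (r : X × Fin K → ℝ), (∀ z, 0 < r z) → ∀ x k,
      (1 + ∑ l ∈ Finset.univ.erase k, r (x, l) / r (x, k))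
        = (∑ l : Fin K, r (x, l)) / r (x, k) := by
    intro r hr x k
    have hrk : r (x, k) ≠ 0 := (hr _).ne'
    rw [← Finset.sum_div, Finset.sum_erase_eq_sub (Finset.mem_univ k)]
    field_simp
    ring
  -- L q in terms of b
  have hLq : L q = ∑ x : X, ∑ k : Fin K, p (x, k) * (- Real.log (b (x, k))) := by
    rw [hL]
    refine Finset.sum_congr rfl fun x _ => Finset.sum_congr rfl fun k _ => ?_
    rw [key q hq x k]
    congr 1
    rw [hbdef]
    simp only
    rw [← Real.log_inv]
    congr 1
    field_simp
    rfl
  -- qstar ratios equal p ratios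
  have hLqs : L qstar = ∑ x : X, ∑ k : Fin K, p (x, k) * (- Real.log (a (x, k))) := by
    rw [hL]
    refine Finset.sum_congr rfl fun x _ => Finset.sum_congr rfl fun k _ => ?_
    have hratio : ∀ l, qstar (x, l) / qstar (x, k) = p (x, l) / p (x, k) := by
      intro l
      have h1 : (∑ l : Fin K, p (x, l)) ≠ 0 := (hSp x).ne'
      rw [hqstar, hqstar, div_div_div_comm, div_self h1, div_one]
    have hqspos : ∀ z : X × Fin K, 0 < qstar z := by
      rintro ⟨x', k'⟩
      rw [hqstar]
      exact div_pos (hpos _) (hSp x')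
    calc p (x, k) * Real.log (1 + ∑ l ∈ Finset.univ.erase k, qstar (x, l) / qstar (x, k))
        = p (x, k) * Real.log (1 + ∑ l ∈ Finset.univ.erase k, p (x, l) / p (x, k)) := by
          simp_rw [hratio]
      _ = p (x, k) * (- Real.log (a (x, k))) := by
          rw [key p hpos x k]
          congr 1
          rw [hadef]
          simp only
          rw [← Real.log_inv]
          congr 1
          field_simp
          rfl
  -- the difference as a sum of nonnegative terms
  set u : X × Fin K → ℝ := fun z => b z / a z with hudef
  have hu : ∀ z, 0 < u z := fun z => div_pos (hb z) (ha z)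
  set F : X × Fin K → ℝ := fun z => p z * (u z - 1 - Real.log (u z)) with hFdef
  have hF0 : ∀ z, 0 ≤ F z := by
    intro z
    have h := Real.log_le_sub_one_of_pos (hu z)
    exact mul_nonneg (hpos z).le (by linarith)
  -- sum of p z * (u z - 1) = 0
  have hsum0 : ∑ z : X × Fin K, p z * (u z - 1) = 0 := by
    have h1 : ∀ z : X × Fin K, p z * u z = Sp z.1 * b z := by
      intro z
      have hpz : p z ≠ 0 := (hpos z).ne'
      have hSpz : Sp z.1 ≠ 0 := (hSp z.1).ne'
      have hSqz : Sq z.1 ≠ 0 := (hSq z.1).ne'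
      show p z * (q z / Sq z.1 / (p z / Sp z.1)) = Sp z.1 * (q z / Sq z.1)
      field_simp
    have h2 : ∑ z : X × Fin K, Sp z.1 * b z = 1 := by
      rw [Fintype.sum_prod_type]
      have : ∀ x : X, ∑ k : Fin K, Sp x * b (x, k) = Sp x := by
        intro x
        rw [← Finset.mul_sum]
        rw [hbdef]
        simp only
        rw [← Finset.sum_div]
        rw [div_self (hSq x).ne']
        ring
      simp_rw [this]
      rw [← hsum, Fintype.sum_prod_type]
    simp_rw [mul_sub, mul_one, Finset.sum_sub_distrib, h1, h2, hsum, sub_self]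
  have hdiff : L q - L qstar = ∑ z : X × Fin K, F z := by
    have hlogu : ∀ z : X × Fin K, Real.log (u z) = Real.log (b z) - Real.log (a z) :=
      fun z => Real.log_div (hb z).ne' (ha z).ne'
    have : ∑ z : X × Fin K, F z
        = ∑ z : X × Fin K, (p z * (u z - 1) + p z * (Real.log (a z) - Real.log (b z))) := by
      refine Finset.sum_congr rfl fun z _ => ?_
      rw [hFdef]
      simp only
      rw [hlogu z]; ring
    rw [this, Finset.sum_add_distrib, hsum0, zero_add, hLq, hLqs,
      ← Finset.sum_sub_distrib, Fintype.sum_prod_type]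
    refine Finset.sum_congr rfl fun x _ => ?_
    rw [← Finset.sum_sub_distrib]
    exact Finset.sum_congr rfl fun k _ => by ring
  have hle : L qstar ≤ L q := by
    have : 0 ≤ ∑ z : X × Fin K, F z := Finset.sum_nonneg fun z _ => hF0 z
    linarith [hdiff]
  refine ⟨hle, ?_⟩
  constructor
  · intro heq
    intro x k
    have hz : ∑ z : X × Fin K, F z = 0 := by linarith [hdiff]
    have hall := (Finset.sum_eq_zero_iff_of_nonneg (fun z _ => hF0 z)).mp hz
    have hFz := hall (x, k) (Finset.mem_univ _)
    have hu1 : u (x, k) = 1 := by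
      by_contra hne
      have hlt := Real.log_lt_sub_one_of_pos (hu (x, k)) hne
      have hp := hpos (x, k)
      have hFz' : p (x, k) * (u (x, k) - 1 - Real.log (u (x, k))) = 0 := hFz
      nlinarith
    have hba : b (x, k) = a (x, k) := (div_eq_one_iff_eq (ha (x, k)).ne').mp hu1
    exact hba
  · intro hq_eq
    have hba : ∀ z : X × Fin K, b z = a z := fun z => hq_eq z.1 z.2
    have : ∑ z : X × Fin K, F z = 0 := by
      refine Finset.sum_eq_zero fun z _ => ?_
      have hu1 : u z = 1 := by
        show b z / a z = 1
        rw [hba z]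
        exact div_self (ha z).ne'
      show p z * (u z - 1 - Real.log (u z)) = 0
      rw [hu1]
      simp
    linarith [hdiff]
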